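/- Let g, h ∈ S(ℝ^d) (Schwartz functions), d ≥ 2, and fix integers j ≥ 0 and i ∈ {j-1, j, j+1} with i ≥ 0, shear parameters ℓ, m ∈ ℤ^{d-1} with |ℓ_i'| ≤ 2^j, |m_i'| ≤ 2^i componentwise, and translation parameters k, n ∈ ℤ^d. Define g_{j,ℓ,k}(x) = |det A|^{j/2} g(B^{[ℓ]} A^j x - k) and h_{i,m,n}(x) = |det A|^{i/2} h(B^{[m]} A^i x - n), where det A = 2^{d+1}. Then for every N > d there is a constant C_N (independent of j, i, ℓ, m, k, n) such that for all x ∈ ℝ^d, |(g_{j,ℓ,k} ∗ h_{i,m,n})(x)| ≤ C_N (1 + 2^i |x - A^{-i}B^{-[m]} n - A^{-j}B^{-[ℓ]} k|)^{-N}. -/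

import Mathlib

open MeasureTheory

noncomputable section

def shearletA (d j : ℕ) [NeZero d] : Matrix (Fin d) (Fin d) ℝ :=
  Matrix.diagonal (fun i => if i = 0 then (4 : ℝ) ^ j else (2 : ℝ) ^ j)

def shearletB (d : ℕ) [NeZero d] (ℓ : Fin d → ℤ) : Matrix (Fin d) (Fin d) ℝ :=
  Matrix.of fun i k => if i = k then 1 else if i = 0 then (ℓ k : ℝ) else 0

def matVec {d : ℕ} (M : Matrix (Fin d) (Fin d) ℝ) (x : EuclideanSpace ℝ (Fin d)) :
    EuclideanSpace ℝ (Fin d) :=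
  (WithLp.equiv 2 (Fin d → ℝ)).symm (M.mulVec (WithLp.equiv 2 (Fin d → ℝ) x))

def intVec (d : ℕ) (k : Fin d → ℤ) : EuclideanSpace ℝ (Fin d) :=
  (WithLp.equiv 2 (Fin d → ℝ)).symm (fun t => (k t : ℝ))

/-- The anisotropically dilated, sheared and translated copy
`g_{j,ℓ,k}(x) = |det A|^{j/2} g(B^[ℓ] A^j x - k)` of `g`, with `det A = 2^{d+1}`. -/
def shearDilate {d : ℕ} [NeZero d] (g : SchwartzMap (EuclideanSpace ℝ (Fin d)) ℂ)
    (j : ℕ) (ℓ k : Fin d → ℤ) (x : EuclideanSpace ℝ (Fin d)) : ℂ :=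
  (Real.sqrt ((2 : ℝ) ^ ((d + 1) * j)) : ℝ) *
    g (matVec (shearletB d ℓ * shearletA d j) x - intVec d k)

/-! ### Auxiliary lemmas -/

set_option linter.unusedSectionVars false
set_option maxHeartbeats 2000000

section Aux

variable {d : ℕ} [NeZero d]

local notation "E" => EuclideanSpace ℝ (Fin d)

/-- The linear map on `EuclideanSpace` given by matrix multiplication. -/
def matL (d : ℕ) (M : Matrix (Fin d) (Fin d) ℝ) :
    EuclideanSpace ℝ (Fin d) →ₗ[ℝ] EuclideanSpace ℝ (Fin d) :=
  (WithLp.linearEquiv 2 ℝ (Fin d → ℝ)).symm.toLinearMap ∘ₗ M.mulVecLin ∘ₗ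
    (WithLp.linearEquiv 2 ℝ (Fin d → ℝ)).toLinearMap

lemma matVec_eq_matL (M : Matrix (Fin d) (Fin d) ℝ) (x : E) : matVec M x = matL d M x := rfl

lemma matL_det (M : Matrix (Fin d) (Fin d) ℝ) : LinearMap.det (matL d M) = M.det := by
  have h := LinearMap.det_conj M.mulVecLin (WithLp.linearEquiv 2 ℝ (Fin d → ℝ)).symm
  simp only [LinearEquiv.symm_symm] at h
  rw [matL, h, ← Matrix.toLin'_apply', LinearMap.det_toLin']

lemma matVec_sub (M : Matrix (Fin d) (Fin d) ℝ) (u v : E) :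
    matVec M (u - v) = matVec M u - matVec M v := by
  simp only [matVec_eq_matL, map_sub]

lemma matVec_inv_cancel (T : Matrix (Fin d) (Fin d) ℝ) (hT : IsUnit T.det) (u : E) :
    matVec T (matVec T⁻¹ u) = u := by
  simp only [matVec, Equiv.apply_symm_apply, Matrix.mulVec_mulVec,
    Matrix.mul_nonsing_inv T hT, Matrix.one_mulVec, Equiv.symm_apply_apply]

lemma coord_le_norm (v : E) (t : Fin d) : |v t| ≤ ‖v‖ := by
  rw [EuclideanSpace.norm_eq, ← Real.sqrt_sq_eq_abs]
  apply Real.sqrt_le_sqrt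
  calc v t ^ 2 = ‖v t‖^2 := by simp [sq_abs]
    _ ≤ ∑ s, ‖v s‖ ^ 2 := Finset.single_le_sum (f := fun s => ‖v s‖^2)
        (fun s _ => by positivity) (Finset.mem_univ t)

lemma norm_le_sum_abs (v : E) : ‖v‖ ≤ ∑ t, |v t| := by
  rw [EuclideanSpace.norm_eq]
  rw [show (∑ t, |v t|) = Real.sqrt ((∑ t, |v t|)^2) by
    rw [Real.sqrt_sq (Finset.sum_nonneg fun s _ => abs_nonneg _)]]
  apply Real.sqrt_le_sqrt
  calc ∑ s, ‖v s‖ ^ 2 = ∑ s, |v s| * |v s| := by simp [sq, Real.norm_eq_abs]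
    _ ≤ ∑ s, |v s| * (∑ t, |v t|) := by
        apply Finset.sum_le_sum; intro s _
        exact mul_le_mul_of_nonneg_left (Finset.single_le_sum (f := fun t => |v t|)
          (fun t _ => abs_nonneg _) (Finset.mem_univ s)) (abs_nonneg _)
    _ = (∑ t, |v t|) ^ 2 := by rw [← Finset.sum_mul, sq]

lemma shearletA_sum (j : ℕ) (v : Fin d → ℝ) (t : Fin d) :
    ∑ x, shearletA d j t x * v x = (if t = 0 then (4:ℝ)^j else 2^j) * v t := by
  simp only [shearletA, Matrix.diagonal_apply, ite_mul, zero_mul]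
  rw [Finset.sum_ite_eq]
  simp

lemma shearMul_apply_ne (j : ℕ) (ℓ : Fin d → ℤ) (v : Fin d → ℝ) {t : Fin d} (ht : t ≠ 0) :
    ((shearletB d ℓ * shearletA d j).mulVec v) t = 2 ^ j * v t := by
  rw [← Matrix.mulVec_mulVec]
  simp only [shearletB, Matrix.mulVec, dotProduct, Matrix.of_apply]
  rw [Finset.sum_eq_single t]
  · rw [shearletA_sum]; simp [ht]
  · intro b _ hb
    simp [hb.symm, ht]
  · simp

lemma shearMul_apply_zero (j : ℕ) (ℓ : Fin d → ℤ) (v : Fin d → ℝ) :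
    ((shearletB d ℓ * shearletA d j).mulVec v) 0
      = 4 ^ j * v 0 + ∑ t ∈ (Finset.univ.erase (0 : Fin d)), (ℓ t : ℝ) * (2 ^ j * v t) := by
  rw [← Matrix.mulVec_mulVec]
  simp only [shearletB, Matrix.mulVec, dotProduct, Matrix.of_apply]
  rw [← Finset.add_sum_erase _ _ (Finset.mem_univ 0)]
  congr 1
  · rw [shearletA_sum]; simp
  · apply Finset.sum_congr rfl
    intro t ht
    have ht0 : t ≠ 0 := (Finset.mem_erase.mp ht).1
    rw [shearletA_sum]
    simp [Ne.symm ht0, ht0]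

lemma shearletB_det (ℓ : Fin d → ℤ) : (shearletB d ℓ).det = 1 := by
  have h : (shearletB d ℓ).BlockTriangular id := by
    intro i k hik
    simp only [id_eq] at hik
    have h1 : i ≠ k := ne_of_gt hik
    have h2 : i ≠ 0 := by
      intro h; subst h; exact absurd hik (by simp)
    simp [shearletB, h1, h2]
  rw [Matrix.det_of_upperTriangular h]
  simp [shearletB]

lemma shearMul_det (j : ℕ) (ℓ : Fin d → ℤ) :
    (shearletB d ℓ * shearletA d j).det = 2 ^ ((d + 1) * j) := by
  rw [Matrix.det_mul, shearletB_det, one_mul, shearletA, Matrix.det_diagonal]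
  rw [← Finset.mul_prod_erase _ _ (Finset.mem_univ 0)]
  have h : ∀ t ∈ Finset.univ.erase (0 : Fin d), (if t = 0 then (4:ℝ)^j else 2^j) = 2 ^ j := by
    intro t ht; simp [(Finset.mem_erase.mp ht).1]
  rw [Finset.prod_congr rfl h, Finset.prod_const]
  have hcard : (Finset.univ.erase (0 : Fin d)).card = d - 1 := by
    rw [Finset.card_erase_of_mem (Finset.mem_univ 0)]; simp
  rw [hcard, if_pos rfl]
  obtain ⟨d', rfl⟩ : ∃ d', d = d' + 1 :=
    ⟨d - 1, (Nat.succ_pred_eq_of_pos (Nat.pos_of_ne_zero (NeZero.ne d))).symm⟩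
  have h4 : (4 : ℝ) ^ j = 2 ^ (2 * j) := by rw [pow_mul]; norm_num
  rw [h4, ← pow_mul, ← pow_add]
  congr 1
  simp
  ring

/-- Lower bound: `2^j ‖v‖ ≤ 2d ‖(B ℓ * A j) v‖` when the shears are bounded by `2^j`. -/
lemma shear_lower_bound (j : ℕ) (ℓ : Fin d → ℤ) (hℓ : ∀ t : Fin d, t ≠ 0 → |ℓ t| ≤ 2 ^ j)
    (v : E) : (2:ℝ) ^ j * ‖v‖ ≤ (2 * d) * ‖matVec (shearletB d ℓ * shearletA d j) v‖ := by
  set w : E := matVec (shearletB d ℓ * shearletA d j) v with hw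
  have h2jpos : (0:ℝ) < 2^j := by positivity
  have hwt : ∀ t : Fin d, w t = ((shearletB d ℓ * shearletA d j).mulVec (fun s => v s)) t :=
    fun t => rfl
  have key : ∀ t : Fin d, t ≠ 0 → (2:ℝ)^j * |v t| ≤ ‖w‖ := by
    intro t ht
    have h1 : (2:ℝ)^j * |v t| = |w t| := by
      rw [hwt t, shearMul_apply_ne j ℓ _ ht, abs_mul, abs_of_pos h2jpos]
    rw [h1]
    exact coord_le_norm w t
  have key0 : (2:ℝ)^j * |v 0| ≤ d * ‖w‖ := by
    have h40 : (4:ℝ)^j * v 0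
        = w 0 - ∑ t ∈ (Finset.univ.erase (0 : Fin d)), (ℓ t : ℝ) * (2 ^ j * v t) := by
      rw [hwt 0, shearMul_apply_zero]; ring
    have habs : (4:ℝ)^j * |v 0|
        ≤ ‖w‖ + ∑ _t ∈ (Finset.univ.erase (0 : Fin d)), (2:ℝ)^j * ‖w‖ := by
      have e1 : (4:ℝ)^j * |v 0| = |(4:ℝ)^j * v 0| := by
        rw [abs_mul, abs_of_pos (show (0:ℝ) < 4^j by positivity)]
      rw [e1, h40]
      refine (abs_sub _ _).trans ?_
      gcongr
      · exact coord_le_norm w 0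
      · refine (Finset.abs_sum_le_sum_abs _ _).trans ?_
        apply Finset.sum_le_sum
        intro t ht
        have ht0 : t ≠ 0 := (Finset.mem_erase.mp ht).1
        have h1 : |(ℓ t : ℝ)| ≤ (2:ℝ)^j := by
          have h2 := hℓ t ht0
          calc |(ℓ t : ℝ)| = ((|ℓ t| : ℤ) : ℝ) := by simp
            _ ≤ ((2^j : ℤ) : ℝ) := by exact_mod_cast h2
            _ = (2:ℝ)^j := by push_cast; ring
        have h2 : (2:ℝ)^j * |v t| ≤ ‖w‖ := key t ht0
        calc |(ℓ t : ℝ) * (2 ^ j * v t)| = |(ℓ t : ℝ)| * ((2:ℝ)^j * |v t|) := by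
              rw [abs_mul, abs_mul, abs_of_pos h2jpos]
          _ ≤ (2:ℝ)^j * ‖w‖ :=
              mul_le_mul h1 h2 (by positivity) (by positivity)
    have hcard : (Finset.univ.erase (0 : Fin d)).card = d - 1 := by
      rw [Finset.card_erase_of_mem (Finset.mem_univ 0)]; simp
    rw [Finset.sum_const, hcard, nsmul_eq_mul] at habs
    have h4 : (4:ℝ)^j = (2:ℝ)^j * 2^j := by rw [← mul_pow]; norm_num
    have hd1 : (1:ℝ) ≤ d := by exact_mod_cast Nat.one_le_iff_ne_zero.mpr (NeZero.ne d)
    have h2j : (1:ℝ) ≤ 2^j := one_le_pow₀ (by norm_num)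
    have hwnn : (0:ℝ) ≤ ‖w‖ := norm_nonneg _
    have hdm1 : ((d - 1 : ℕ) : ℝ) = (d:ℝ) - 1 := by
      rw [Nat.cast_sub (Nat.one_le_iff_ne_zero.mpr (NeZero.ne d))]; simp
    rw [hdm1, h4] at habs
    have h5 : (2:ℝ)^j * ((2:ℝ)^j * |v 0|) ≤ (2:ℝ)^j * ((d:ℝ) * ‖w‖) := by
      nlinarith [abs_nonneg (v 0)]
    exact le_of_mul_le_mul_left h5 h2jpos
  calc (2:ℝ)^j * ‖v‖ ≤ (2:ℝ)^j * ∑ t, |v t| := by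
        have h3 := norm_le_sum_abs v
        gcongr
    _ = ∑ t, (2:ℝ)^j * |v t| := Finset.mul_sum _ _ _
    _ = (2:ℝ)^j * |v 0| + ∑ t ∈ (Finset.univ.erase (0 : Fin d)), (2:ℝ)^j * |v t| :=
        (Finset.add_sum_erase _ _ (Finset.mem_univ 0)).symm
    _ ≤ (d : ℝ) * ‖w‖ + ∑ _t ∈ (Finset.univ.erase (0 : Fin d)), ‖w‖ := by
        exact add_le_add key0 (Finset.sum_le_sum fun t ht => key t (Finset.mem_erase.mp ht).1)
    _ ≤ (2 * d) * ‖w‖ := by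
        rw [Finset.sum_const, Finset.card_erase_of_mem (Finset.mem_univ 0), nsmul_eq_mul]
        simp only [Finset.card_univ, Fintype.card_fin]
        have h5 : ((d - 1 : ℕ) : ℝ) ≤ (d : ℝ) := by exact_mod_cast Nat.sub_le d 1
        nlinarith [norm_nonneg w]

lemma integrable_japanese {r : ℝ} (hr : (d : ℝ) < r) :
    Integrable (fun u : E => (1 + ‖u‖) ^ (-r)) := by
  apply integrable_one_add_norm
  rwa [finrank_euclideanSpace_fin]

lemma map_volume_matL (T : Matrix (Fin d) (Fin d) ℝ) (hT : T.det ≠ 0) :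
    (volume : Measure E).map (matL d T) = ENNReal.ofReal |T.det|⁻¹ • volume := by
  have h := Measure.map_linearMap_addHaar_eq_smul_addHaar (volume : Measure E)
    (f := matL d T) (by rw [matL_det]; exact hT)
  rwa [matL_det, abs_inv] at h

lemma integrable_comp_shear (T : Matrix (Fin d) (Fin d) ℝ) (hT : T.det ≠ 0) (w : E)
    {r : ℝ} (hr : (d : ℝ) < r) :
    Integrable (fun y : E => (1 + ‖matVec T y - w‖) ^ (-r)) := by
  have hF : Integrable (fun z : E => (1 + ‖z - w‖) ^ (-r)) :=
    (integrable_japanese hr).comp_sub_right w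
  have hcont : Continuous (matL d T) := (matL d T).continuous_of_finiteDimensional
  have hmap := map_volume_matL T hT
  have hFmap : Integrable (fun z : E => (1 + ‖z - w‖) ^ (-r)) (volume.map (matL d T)) := by
    rw [hmap]
    exact hF.smul_measure ENNReal.ofReal_ne_top
  have h := (integrable_map_measure hFmap.aestronglyMeasurable hcont.aemeasurable).mp hFmap
  simpa [Function.comp_def, matVec_eq_matL] using h

lemma integral_comp_shear (T : Matrix (Fin d) (Fin d) ℝ) (hT : T.det ≠ 0) (w : E)
    {r : ℝ} (hr : (d : ℝ) < r) :
    (∫ y : E, (1 + ‖matVec T y - w‖) ^ (-r)) =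
      |T.det|⁻¹ * ∫ u : E, (1 + ‖u‖) ^ (-r) := by
  have hcont : Continuous (matL d T) := (matL d T).continuous_of_finiteDimensional
  have hFc : Continuous (fun z : E => (1 + ‖z - w‖) ^ (-r)) := by
    apply Continuous.rpow_const
    · continuity
    · intro z
      left
      positivity
  have h1 : (∫ y : E, (1 + ‖matVec T y - w‖) ^ (-r)) =
      ∫ z : E, (1 + ‖z - w‖) ^ (-r) ∂(volume.map (matL d T)) := by
    rw [integral_map hcont.aemeasurable hFc.aestronglyMeasurable]
    simp [matVec_eq_matL]
  rw [h1, map_volume_matL T hT, integral_smul_measure, ENNReal.toReal_ofReal (by positivity),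
    integral_sub_right_eq_self (fun z : E => (1 + ‖z‖) ^ (-r)) w]
  simp

lemma schwartz_bound (f : SchwartzMap E ℂ) (M : ℕ) :
    ∃ C : ℝ, 0 < C ∧ ∀ x, ‖f x‖ ≤ C * ((1 + ‖x‖) ^ M)⁻¹ := by
  set S : ℝ := 2 ^ M * (Finset.Iic (M, 0)).sup (fun m => SchwartzMap.seminorm ℝ m.1 m.2) f with hS
  have hS0 : 0 ≤ S := by
    apply mul_nonneg (by positivity)
    exact apply_nonneg _ f
  refine ⟨S + 1, by linarith, fun x => ?_⟩
  have hb := SchwartzMap.one_add_le_sup_seminorm_apply (𝕜 := ℝ) (m := (M, 0)) le_rfl le_rfl f x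
  rw [norm_iteratedFDeriv_zero] at hb
  have hpos : (0:ℝ) < (1 + ‖x‖) ^ M := by positivity
  rw [← div_eq_mul_inv, le_div_iff₀ hpos, mul_comm]
  calc (1 + ‖x‖) ^ M * ‖f x‖ ≤ S := hb
    _ ≤ S + 1 := by linarith

lemma inv_pow_bound {p σ c : ℝ} (n : ℕ) (hp : 0 ≤ p) (hσ : 0 ≤ σ) (hc : 0 < c)
    (h : 1 + σ ≤ c * (1 + p)) : ((1 + p) ^ n)⁻¹ ≤ c ^ n * ((1 + σ) ^ n)⁻¹ := by
  have hx : (0:ℝ) < (1 + p) ^ n := by positivity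
  have hy : (0:ℝ) < (1 + σ) ^ n := by positivity
  have h1 : (1 + σ) ^ n ≤ c ^ n * (1 + p) ^ n := by
    rw [← mul_pow]; exact pow_le_pow_left₀ (by linarith) h n
  rw [← div_eq_mul_inv, le_div_iff₀ hy]
  calc ((1 + p) ^ n)⁻¹ * (1 + σ) ^ n
      ≤ ((1 + p) ^ n)⁻¹ * (c ^ n * (1 + p) ^ n) :=
        mul_le_mul_of_nonneg_left h1 (le_of_lt (inv_pos.mpr hx))
    _ = c ^ n := by field_simp

lemma sqrt_scale (d j i : ℕ) (hji : (j:ℤ) - 1 ≤ (i:ℤ)) (hij : (i:ℤ) ≤ (j:ℤ) + 1) :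
    Real.sqrt ((2:ℝ) ^ ((d+1)*j)) * Real.sqrt ((2:ℝ) ^ ((d+1)*i)) *
      (((2:ℝ) ^ ((d+1)*j))⁻¹ + ((2:ℝ) ^ ((d+1)*i))⁻¹) ≤ 2 ^ (d+2) := by
  have hij' : i ≤ j + 1 := by omega
  have hji' : j ≤ i + 1 := by omega
  set X : ℝ := (2:ℝ) ^ ((d+1)*j) with hX
  set Y : ℝ := (2:ℝ) ^ ((d+1)*i) with hY
  have hX0 : (0:ℝ) < X := by positivity
  have hY0 : (0:ℝ) < Y := by positivity
  have hsX : (0:ℝ) < Real.sqrt X := Real.sqrt_pos.mpr hX0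
  have hsY : (0:ℝ) < Real.sqrt Y := Real.sqrt_pos.mpr hY0
  have key : ∀ (U V : ℝ), 0 < U → 0 < V → V ≤ 2^(d+1) * U →
      Real.sqrt V ≤ 2^(d+1) * Real.sqrt U := by
    intro U V hU hV hUV
    calc Real.sqrt V ≤ Real.sqrt ((2:ℝ)^(d+1) * U) := Real.sqrt_le_sqrt hUV
      _ = Real.sqrt ((2:ℝ)^(d+1)) * Real.sqrt U := Real.sqrt_mul (by positivity) U
      _ ≤ 2^(d+1) * Real.sqrt U := by
          apply mul_le_mul_of_nonneg_right _ (Real.sqrt_nonneg U)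
          calc Real.sqrt ((2:ℝ)^(d+1)) ≤ Real.sqrt (((2:ℝ)^(d+1))^2) := by
                apply Real.sqrt_le_sqrt
                nlinarith [one_le_pow₀ (show (1:ℝ) ≤ 2 by norm_num) (n := d+1)]
            _ = 2^(d+1) := Real.sqrt_sq (by positivity)
  have hYX : Y ≤ 2^(d+1) * X := by
    rw [hX, hY, ← pow_add]
    apply pow_le_pow_right₀ (by norm_num)
    calc (d+1)*i ≤ (d+1)*(j+1) := Nat.mul_le_mul_left _ hij'
      _ = d + 1 + (d+1)*j := by ring
  have hXY : X ≤ 2^(d+1) * Y := by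
    rw [hX, hY, ← pow_add]
    apply pow_le_pow_right₀ (by norm_num)
    calc (d+1)*j ≤ (d+1)*(i+1) := Nat.mul_le_mul_left _ hji'
      _ = d + 1 + (d+1)*i := by ring
  have h1 : Real.sqrt Y ≤ 2^(d+1) * Real.sqrt X := key X Y hX0 hY0 hYX
  have h2 : Real.sqrt X ≤ 2^(d+1) * Real.sqrt Y := key Y X hY0 hX0 hXY
  have hXe : X = Real.sqrt X * Real.sqrt X := (Real.mul_self_sqrt hX0.le).symm
  have hYe : Y = Real.sqrt Y * Real.sqrt Y := (Real.mul_self_sqrt hY0.le).symm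
  have e1 : Real.sqrt X * Real.sqrt Y * X⁻¹ = Real.sqrt Y / Real.sqrt X := by
    have hXne : Real.sqrt X ≠ 0 := hsX.ne'
    calc Real.sqrt X * Real.sqrt Y * X⁻¹
        = Real.sqrt X * Real.sqrt Y * (Real.sqrt X * Real.sqrt X)⁻¹ := by rw [← hXe]
      _ = Real.sqrt Y / Real.sqrt X := by field_simp
  have e2 : Real.sqrt X * Real.sqrt Y * Y⁻¹ = Real.sqrt X / Real.sqrt Y := by
    have hYne : Real.sqrt Y ≠ 0 := hsY.ne'
    calc Real.sqrt X * Real.sqrt Y * Y⁻¹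
        = Real.sqrt X * Real.sqrt Y * (Real.sqrt Y * Real.sqrt Y)⁻¹ := by rw [← hYe]
      _ = Real.sqrt X / Real.sqrt Y := by field_simp
  calc Real.sqrt X * Real.sqrt Y * (X⁻¹ + Y⁻¹)
      = Real.sqrt Y / Real.sqrt X + Real.sqrt X / Real.sqrt Y := by
        rw [mul_add, e1, e2]
    _ ≤ 2^(d+1) + 2^(d+1) := by
        apply add_le_add
        · rw [div_le_iff₀ hsX]; nlinarith
        · rw [div_le_iff₀ hsY]; nlinarith
    _ = 2^(d+2) := by ring

lemma inv_pow_eq_rpow_dp1 (t : ℝ) (ht : 0 ≤ t) :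
    ((1 + t) ^ (d + 1))⁻¹ = (1 + t) ^ (-((d:ℝ) + 1)) := by
  have h : -((d:ℝ) + 1) = -(((d + 1 : ℕ)) : ℝ) := by push_cast; ring
  rw [h, Real.rpow_neg (by linarith), Real.rpow_natCast]


/-- Abstract decay-transfer estimate. -/
lemma decay_transfer (N' D : ℕ) {p q su sv s ci cj dR : ℝ}
    (hp0 : 0 ≤ p) (hq0 : 0 ≤ q) (hs0 : 0 ≤ s) (hsu : 0 ≤ su) (hsv : 0 ≤ sv)
    (hsplit : s ≤ su + sv)
    (hdR : 1 ≤ dR) (hci : 0 < ci) (hcj : 0 < cj) (hij : ci ≤ 2 * cj)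
    (hlow1 : cj * su ≤ 2 * dR * p) (hlow2 : ci * sv ≤ 2 * dR * q) :
    ((1 + p) ^ (N' + D))⁻¹ * ((1 + q) ^ (N' + D))⁻¹
      ≤ (8 * dR) ^ N' * ((1 + ci * s) ^ N')⁻¹ * (((1 + p) ^ D)⁻¹ + ((1 + q) ^ D)⁻¹) := by
  have hP1 : ((1 + p) ^ (N' + D))⁻¹ ≤ 1 :=
    inv_le_one_of_one_le₀ (one_le_pow₀ (by linarith))
  have hQ1 : ((1 + q) ^ (N' + D))⁻¹ ≤ 1 :=
    inv_le_one_of_one_le₀ (one_le_pow₀ (by linarith))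
  have hQD : (0:ℝ) ≤ ((1 + q) ^ D)⁻¹ := by positivity
  have hPD : (0:ℝ) ≤ ((1 + p) ^ D)⁻¹ := by positivity
  rcases le_or_gt (s / 2) su with hcase | hcase
  · have hub : 1 + ci * s ≤ (8 * dR) * (1 + p) := by
      have f1 : ci * s ≤ 2 * cj * s := mul_le_mul_of_nonneg_right hij hs0
      have f2 : cj * s ≤ cj * (2 * su) := by
        apply mul_le_mul_of_nonneg_left _ hcj.le
        linarith
      nlinarith
    have hb1 : ((1 + p) ^ N')⁻¹ ≤ (8 * dR) ^ N' * ((1 + ci * s) ^ N')⁻¹ :=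
      inv_pow_bound N' hp0 (by positivity) (by linarith) hub
    have hfac : ((1 + p) ^ (N' + D))⁻¹ = ((1 + p) ^ N')⁻¹ * ((1 + p) ^ D)⁻¹ := by
      rw [pow_add, mul_inv]
    calc ((1 + p) ^ (N' + D))⁻¹ * ((1 + q) ^ (N' + D))⁻¹
        ≤ ((1 + p) ^ (N' + D))⁻¹ * 1 := by
          apply mul_le_mul_of_nonneg_left hQ1 (by positivity)
      _ = ((1 + p) ^ N')⁻¹ * ((1 + p) ^ D)⁻¹ := by rw [mul_one, hfac]
      _ ≤ ((8 * dR) ^ N' * ((1 + ci * s) ^ N')⁻¹) * ((1 + p) ^ D)⁻¹ :=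
          mul_le_mul_of_nonneg_right hb1 hPD
      _ ≤ ((8 * dR) ^ N' * ((1 + ci * s) ^ N')⁻¹) * (((1 + p) ^ D)⁻¹ + ((1 + q) ^ D)⁻¹) := by
          have hnn : (0:ℝ) ≤ (8 * dR) ^ N' * ((1 + ci * s) ^ N')⁻¹ := by
            apply mul_nonneg (by positivity)
            have : (0:ℝ) < 1 + ci * s := by nlinarith
            positivity
          apply mul_le_mul_of_nonneg_left _ hnn
          linarith
  · have hcase' : s / 2 ≤ sv := by linarith
    have hub : 1 + ci * s ≤ (8 * dR) * (1 + q) := by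
      have f2 : ci * s ≤ ci * (2 * sv) := by
        apply mul_le_mul_of_nonneg_left _ hci.le
        linarith
      nlinarith
    have hb1 : ((1 + q) ^ N')⁻¹ ≤ (8 * dR) ^ N' * ((1 + ci * s) ^ N')⁻¹ :=
      inv_pow_bound N' hq0 (by positivity) (by linarith) hub
    have hfac : ((1 + q) ^ (N' + D))⁻¹ = ((1 + q) ^ N')⁻¹ * ((1 + q) ^ D)⁻¹ := by
      rw [pow_add, mul_inv]
    calc ((1 + p) ^ (N' + D))⁻¹ * ((1 + q) ^ (N' + D))⁻¹
        ≤ 1 * ((1 + q) ^ (N' + D))⁻¹ := by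
          apply mul_le_mul_of_nonneg_right hP1 (by positivity)
      _ = ((1 + q) ^ N')⁻¹ * ((1 + q) ^ D)⁻¹ := by rw [one_mul, hfac]
      _ ≤ ((8 * dR) ^ N' * ((1 + ci * s) ^ N')⁻¹) * ((1 + q) ^ D)⁻¹ :=
          mul_le_mul_of_nonneg_right hb1 hQD
      _ ≤ ((8 * dR) ^ N' * ((1 + ci * s) ^ N')⁻¹) * (((1 + p) ^ D)⁻¹ + ((1 + q) ^ D)⁻¹) := by
          have hnn : (0:ℝ) ≤ (8 * dR) ^ N' * ((1 + ci * s) ^ N')⁻¹ := by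
            apply mul_nonneg (by positivity)
            have : (0:ℝ) < 1 + ci * s := by nlinarith
            positivity
          apply mul_le_mul_of_nonneg_left _ hnn
          linarith

end Aux

/-- Almost orthogonality: decay of the convolution of two shear-dilated Schwartz
functions at neighbouring scales. -/
theorem conv_shearlets_decay (d : ℕ) [NeZero d] (hd : 2 ≤ d)
    (g h : SchwartzMap (EuclideanSpace ℝ (Fin d)) ℂ) :
    ∀ N : ℝ, (d : ℝ) < N → ∃ C : ℝ, 0 < C ∧
      ∀ (j i : ℕ), (j : ℤ) - 1 ≤ (i : ℤ) → (i : ℤ) ≤ (j : ℤ) + 1 →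
        ∀ (ℓ m : Fin d → ℤ), (∀ t : Fin d, t ≠ 0 → |ℓ t| ≤ 2 ^ j) →
          (∀ t : Fin d, t ≠ 0 → |m t| ≤ 2 ^ i) →
          ∀ (k n : Fin d → ℤ) (x : EuclideanSpace ℝ (Fin d)),
            ‖∫ y : EuclideanSpace ℝ (Fin d),
                shearDilate g j ℓ k y * shearDilate h i m n (x - y)‖ ≤
              C * (1 + (2 : ℝ) ^ i *
                ‖x - matVec (shearletB d m * shearletA d i)⁻¹ (intVec d n) -
                  matVec (shearletB d ℓ * shearletA d j)⁻¹ (intVec d k)‖) ^ (-N) := by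
  intro N hN
  set N' : ℕ := ⌈N⌉₊ with hN'def
  have hNN' : N ≤ N' := Nat.le_ceil N
  set M : ℕ := N' + (d + 1) with hMdef
  obtain ⟨Cg, hCg0, hCg⟩ := schwartz_bound g M
  obtain ⟨Ch, hCh0, hCh⟩ := schwartz_bound h M
  set I₀ : ℝ := ∫ u : EuclideanSpace ℝ (Fin d), (1 + ‖u‖) ^ (-((d:ℝ) + 1)) with hI₀def
  have hI₀nn : 0 ≤ I₀ := by
    rw [hI₀def]
    exact integral_nonneg (fun u => by positivity)
  clear_value I₀
  have hrd : (d : ℝ) < (d:ℝ) + 1 := by linarith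
  have hd1 : (1:ℝ) ≤ (d:ℝ) := by exact_mod_cast le_trans one_le_two hd
  have h8d : (0:ℝ) ≤ 8 * (d:ℝ) := by linarith
  have hC0 : 0 ≤ Cg * Ch * (8 * (d:ℝ)) ^ N' * I₀ * 2 ^ (d + 2) :=
    mul_nonneg (mul_nonneg (mul_nonneg (mul_nonneg hCg0.le hCh0.le)
      (pow_nonneg h8d N')) hI₀nn) (by positivity)
  refine ⟨Cg * Ch * (8 * (d:ℝ)) ^ N' * I₀ * 2 ^ (d + 2) + 1, by linarith, ?_⟩
  intro j i hji hij ℓ m hℓ hm k n x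
  set T₁ := shearletB d ℓ * shearletA d j with hT₁def
  set T₂ := shearletB d m * shearletA d i with hT₂def
  have hdet₁ : T₁.det = 2 ^ ((d + 1) * j) := shearMul_det j ℓ
  have hdet₂ : T₂.det = 2 ^ ((d + 1) * i) := shearMul_det i m
  have lower₁ : ∀ v : EuclideanSpace ℝ (Fin d),
      (2:ℝ) ^ j * ‖v‖ ≤ (2 * d) * ‖matVec T₁ v‖ := by
    rw [hT₁def]; exact shear_lower_bound j ℓ hℓ
  have lower₂ : ∀ v : EuclideanSpace ℝ (Fin d),
      (2:ℝ) ^ i * ‖v‖ ≤ (2 * d) * ‖matVec T₂ v‖ := by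
    rw [hT₂def]; exact shear_lower_bound i m hm
  have hsd₁ : ∀ y : EuclideanSpace ℝ (Fin d), shearDilate g j ℓ k y
      = (Real.sqrt ((2 : ℝ) ^ ((d + 1) * j)) : ℝ) * g (matVec T₁ y - intVec d k) := by
    rw [hT₁def]; intro y; rfl
  have hsd₂ : ∀ y : EuclideanSpace ℝ (Fin d), shearDilate h i m n y
      = (Real.sqrt ((2 : ℝ) ^ ((d + 1) * i)) : ℝ) * h (matVec T₂ y - intVec d n) := by
    rw [hT₂def]; intro y; rfl
  clear_value T₁ T₂
  have hdet₁0 : T₁.det ≠ 0 := by rw [hdet₁]; positivity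
  have hdet₂0 : T₂.det ≠ 0 := by rw [hdet₂]; positivity
  have hu₁ : IsUnit T₁.det := isUnit_iff_ne_zero.mpr hdet₁0
  have hu₂ : IsUnit T₂.det := isUnit_iff_ne_zero.mpr hdet₂0
  set a := matVec T₁⁻¹ (intVec d k) with hadef
  set b := matVec T₂⁻¹ (intVec d n) with hbdef
  have hTa : matVec T₁ a = intVec d k := by rw [hadef]; exact matVec_inv_cancel T₁ hu₁ _
  have hTb : matVec T₂ b = intVec d n := by rw [hbdef]; exact matVec_inv_cancel T₂ hu₂ _
  clear_value a b
  set s := ‖x - b - a‖ with hsdef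
  have hs0 : 0 ≤ s := by rw [hsdef]; exact norm_nonneg _
  have hsplit : ∀ y : EuclideanSpace ℝ (Fin d), s ≤ ‖y - a‖ + ‖x - y - b‖ := by
    intro y
    have e : x - b - a = (y - a) + (x - y - b) := by abel
    rw [hsdef, e]
    exact norm_add_le _ _
  clear_value s
  have h1s : (0:ℝ) < 1 + 2 ^ i * s := by
    have : (0:ℝ) < 2 ^ i := by positivity
    nlinarith
  set Sinv : ℝ := ((1 + 2 ^ i * s) ^ N')⁻¹ with hSinvdef
  have hSinv0 : 0 ≤ Sinv := by
    rw [hSinvdef]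
    exact (inv_pos.mpr (pow_pos h1s _)).le
  clear_value Sinv
  set K : ℝ := Real.sqrt ((2:ℝ) ^ ((d + 1) * j)) * Real.sqrt ((2:ℝ) ^ ((d + 1) * i)) *
    Cg * Ch * (8 * (d:ℝ)) ^ N' * Sinv with hKdef
  have hK0 : 0 ≤ K := by
    rw [hKdef]
    exact mul_nonneg (mul_nonneg (mul_nonneg (mul_nonneg (mul_nonneg
      (Real.sqrt_nonneg _) (Real.sqrt_nonneg _)) hCg0.le) hCh0.le)
      (pow_nonneg h8d N')) hSinv0
  clear_value K
  -- argument rewriting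
  have hz₁ : ∀ y : EuclideanSpace ℝ (Fin d),
      matVec T₁ y - intVec d k = matVec T₁ (y - a) := by
    intro y
    rw [matVec_sub, hTa]
  have hz₂ : ∀ y : EuclideanSpace ℝ (Fin d),
      matVec T₂ (x - y) - intVec d n = matVec T₂ (x - y - b) := by
    intro y
    rw [matVec_sub T₂ (x - y) b, hTb]
  set Q₁ : EuclideanSpace ℝ (Fin d) → ℝ :=
    fun y => ((1 + ‖matVec T₁ (y - a)‖) ^ (d + 1))⁻¹ with hQ₁def
  set Q₂ : EuclideanSpace ℝ (Fin d) → ℝ :=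
    fun y => ((1 + ‖matVec T₂ (x - y - b)‖) ^ (d + 1))⁻¹ with hQ₂def
  -- pointwise bound
  have hpt : ∀ y : EuclideanSpace ℝ (Fin d),
      ‖shearDilate g j ℓ k y * shearDilate h i m n (x - y)‖ ≤ K * (Q₁ y + Q₂ y) := by
    intro y
    have hnorm : ‖shearDilate g j ℓ k y * shearDilate h i m n (x - y)‖
        = Real.sqrt ((2:ℝ) ^ ((d + 1) * j)) * Real.sqrt ((2:ℝ) ^ ((d + 1) * i)) *
          (‖g (matVec T₁ (y - a))‖ * ‖h (matVec T₂ (x - y - b))‖) := by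
      rw [hsd₁ y, hsd₂ (x - y), hz₁ y, hz₂ y]
      rw [norm_mul, norm_mul, norm_mul, Complex.norm_real, Complex.norm_real,
        Real.norm_eq_abs, Real.norm_eq_abs, abs_of_nonneg (Real.sqrt_nonneg _),
        abs_of_nonneg (Real.sqrt_nonneg _)]
      ring
    have hgb : ‖g (matVec T₁ (y - a))‖ ≤ Cg * ((1 + ‖matVec T₁ (y - a)‖) ^ M)⁻¹ := hCg _
    have hhb : ‖h (matVec T₂ (x - y - b))‖ ≤ Ch * ((1 + ‖matVec T₂ (x - y - b)‖) ^ M)⁻¹ := hCh _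
    have h2ij : (2:ℝ) ^ i ≤ 2 * 2 ^ j := by
      have hij' : i ≤ j + 1 := by omega
      calc (2:ℝ) ^ i ≤ 2 ^ (j + 1) := pow_le_pow_right₀ (by norm_num) hij'
        _ = 2 * 2 ^ j := by ring
    have hmain := decay_transfer N' (d + 1)
      (norm_nonneg (matVec T₁ (y - a))) (norm_nonneg (matVec T₂ (x - y - b)))
      hs0 (norm_nonneg (y - a)) (norm_nonneg (x - y - b)) (hsplit y) hd1
      (by positivity : (0:ℝ) < 2 ^ i) (by positivity : (0:ℝ) < 2 ^ j) h2ij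
      (lower₁ (y - a)) (lower₂ (x - y - b))
    have hQ₁y : Q₁ y = ((1 + ‖matVec T₁ (y - a)‖) ^ (d + 1))⁻¹ := by rw [hQ₁def]
    have hQ₂y : Q₂ y = ((1 + ‖matVec T₂ (x - y - b)‖) ^ (d + 1))⁻¹ := by rw [hQ₂def]
    have hprod_nn : (0:ℝ) ≤ Real.sqrt ((2:ℝ) ^ ((d + 1) * j)) *
        Real.sqrt ((2:ℝ) ^ ((d + 1) * i)) * Cg * Ch :=
      mul_nonneg (mul_nonneg (mul_nonneg (Real.sqrt_nonneg _) (Real.sqrt_nonneg _))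
        hCg0.le) hCh0.le
    calc ‖shearDilate g j ℓ k y * shearDilate h i m n (x - y)‖
        = Real.sqrt ((2:ℝ) ^ ((d + 1) * j)) * Real.sqrt ((2:ℝ) ^ ((d + 1) * i)) *
          (‖g (matVec T₁ (y - a))‖ * ‖h (matVec T₂ (x - y - b))‖) := hnorm
      _ ≤ Real.sqrt ((2:ℝ) ^ ((d + 1) * j)) * Real.sqrt ((2:ℝ) ^ ((d + 1) * i)) *
          ((Cg * ((1 + ‖matVec T₁ (y - a)‖) ^ M)⁻¹) *
            (Ch * ((1 + ‖matVec T₂ (x - y - b)‖) ^ M)⁻¹)) := by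
          apply mul_le_mul_of_nonneg_left _
            (mul_nonneg (Real.sqrt_nonneg _) (Real.sqrt_nonneg _))
          apply mul_le_mul hgb hhb (norm_nonneg _)
          have : (0:ℝ) ≤ ((1 + ‖matVec T₁ (y - a)‖) ^ M)⁻¹ := by positivity
          exact mul_nonneg hCg0.le this
      _ = Real.sqrt ((2:ℝ) ^ ((d + 1) * j)) * Real.sqrt ((2:ℝ) ^ ((d + 1) * i)) * Cg * Ch *
          (((1 + ‖matVec T₁ (y - a)‖) ^ M)⁻¹ * ((1 + ‖matVec T₂ (x - y - b)‖) ^ M)⁻¹) := by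
          ring
      _ ≤ Real.sqrt ((2:ℝ) ^ ((d + 1) * j)) * Real.sqrt ((2:ℝ) ^ ((d + 1) * i)) * Cg * Ch *
          ((8 * (d:ℝ)) ^ N' * ((1 + 2 ^ i * s) ^ N')⁻¹ *
            (((1 + ‖matVec T₁ (y - a)‖) ^ (d + 1))⁻¹ +
              ((1 + ‖matVec T₂ (x - y - b)‖) ^ (d + 1))⁻¹)) := by
          rw [hMdef]
          exact mul_le_mul_of_nonneg_left hmain hprod_nn
      _ = K * (Q₁ y + Q₂ y) := by
          rw [hKdef, hSinvdef, hQ₁y, hQ₂y]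
          ring
  -- integrable form of the dominators
  have hQ₁eq : Q₁ = fun y => (1 + ‖matVec T₁ y - intVec d k‖) ^ (-((d:ℝ) + 1)) := by
    rw [hQ₁def]
    funext y
    rw [hz₁ y]
    exact inv_pow_eq_rpow_dp1 _ (norm_nonneg _)
  have hw₂ : ∀ y : EuclideanSpace ℝ (Fin d),
      ‖matVec T₂ (x - y - b)‖ = ‖matVec T₂ y - (matVec T₂ x - intVec d n)‖ := by
    intro y
    rw [← hz₂ y, matVec_sub T₂ x y]
    rw [show matVec T₂ x - matVec T₂ y - intVec d n
        = -(matVec T₂ y - (matVec T₂ x - intVec d n)) by abel, norm_neg]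
  have hQ₂eq : Q₂ = fun y =>
      (1 + ‖matVec T₂ y - (matVec T₂ x - intVec d n)‖) ^ (-((d:ℝ) + 1)) := by
    rw [hQ₂def]
    funext y
    rw [hw₂ y]
    exact inv_pow_eq_rpow_dp1 _ (norm_nonneg _)
  clear_value Q₁ Q₂
  have hint₁ : Integrable Q₁ := by
    rw [hQ₁eq]; exact integrable_comp_shear T₁ hdet₁0 _ hrd
  have hint₂ : Integrable Q₂ := by
    rw [hQ₂eq]; exact integrable_comp_shear T₂ hdet₂0 _ hrd
  have hGint : Integrable (fun y => K * (Q₁ y + Q₂ y)) := ((hint₁.add hint₂).const_mul K)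
  have hIval : (∫ y, (Q₁ y + Q₂ y))
      = ((2:ℝ) ^ ((d + 1) * j))⁻¹ * I₀ + ((2:ℝ) ^ ((d + 1) * i))⁻¹ * I₀ := by
    rw [integral_add hint₁ hint₂]
    congr 1
    · rw [hQ₁eq, integral_comp_shear T₁ hdet₁0 _ hrd, hdet₁,
        abs_of_pos (by positivity : (0:ℝ) < 2 ^ ((d+1)*j)), hI₀def]
    · rw [hQ₂eq, integral_comp_shear T₂ hdet₂0 _ hrd, hdet₂,
        abs_of_pos (by positivity : (0:ℝ) < 2 ^ ((d+1)*i)), hI₀def]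
  have htail_nn : (0:ℝ) ≤ Cg * Ch * (8 * (d:ℝ)) ^ N' * Sinv * I₀ :=
    mul_nonneg (mul_nonneg (mul_nonneg (mul_nonneg hCg0.le hCh0.le)
      (pow_nonneg h8d N')) hSinv0) hI₀nn
  have hfinal : ‖∫ y : EuclideanSpace ℝ (Fin d),
      shearDilate g j ℓ k y * shearDilate h i m n (x - y)‖
      ≤ Cg * Ch * (8 * (d:ℝ)) ^ N' * I₀ * 2 ^ (d + 2) * Sinv := by
    calc ‖∫ y : EuclideanSpace ℝ (Fin d),
        shearDilate g j ℓ k y * shearDilate h i m n (x - y)‖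
        ≤ ∫ y, ‖shearDilate g j ℓ k y * shearDilate h i m n (x - y)‖ :=
          norm_integral_le_integral_norm _
      _ ≤ ∫ y, K * (Q₁ y + Q₂ y) :=
          integral_mono_of_nonneg (Filter.Eventually.of_forall fun y => norm_nonneg _)
            hGint (Filter.Eventually.of_forall hpt)
      _ = K * (((2:ℝ) ^ ((d + 1) * j))⁻¹ * I₀ + ((2:ℝ) ^ ((d + 1) * i))⁻¹ * I₀) := by
          rw [integral_const_mul, hIval]
      _ = (Real.sqrt ((2:ℝ) ^ ((d + 1) * j)) * Real.sqrt ((2:ℝ) ^ ((d + 1) * i)) *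
            (((2:ℝ) ^ ((d + 1) * j))⁻¹ + ((2:ℝ) ^ ((d + 1) * i))⁻¹))
          * (Cg * Ch * (8 * (d:ℝ)) ^ N' * Sinv * I₀) := by rw [hKdef]; ring
      _ ≤ 2 ^ (d + 2) * (Cg * Ch * (8 * (d:ℝ)) ^ N' * Sinv * I₀) :=
          mul_le_mul_of_nonneg_right (sqrt_scale d j i hji hij) htail_nn
      _ = Cg * Ch * (8 * (d:ℝ)) ^ N' * I₀ * 2 ^ (d + 2) * Sinv := by ring
  refine hfinal.trans ?_
  have hSinvle : Sinv ≤ (1 + 2 ^ i * s) ^ (-N) := by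
    rw [hSinvdef, ← Real.rpow_natCast (1 + 2 ^ i * s) N', ← Real.rpow_neg h1s.le]
    apply Real.rpow_le_rpow_of_exponent_le _ (by linarith)
    nlinarith [pow_pos (show (0:ℝ) < 2 by norm_num) i, hs0]
  have hrpow_nn : (0:ℝ) ≤ (1 + 2 ^ i * s) ^ (-N) := Real.rpow_nonneg h1s.le _
  calc Cg * Ch * (8 * (d:ℝ)) ^ N' * I₀ * 2 ^ (d + 2) * Sinv
      ≤ Cg * Ch * (8 * (d:ℝ)) ^ N' * I₀ * 2 ^ (d + 2) * ((1 + 2 ^ i * s) ^ (-N)) :=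
        mul_le_mul_of_nonneg_left hSinvle hC0
    _ ≤ (Cg * Ch * (8 * (d:ℝ)) ^ N' * I₀ * 2 ^ (d + 2) + 1) * ((1 + 2 ^ i * s) ^ (-N)) := by
        apply mul_le_mul_of_nonneg_right _ hrpow_nn
        linarith
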